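/- For every n ≥ 1 and every sequence of color lists L₁, …, L_n each of size at least 33, there is a choice s₁, …, s_n with sᵢ ∈ Lᵢ for all i such that the sequence s₁…s_n contains no factor (block of consecutive terms) of the form x₁…x_r y₁…y_g x₁…x_r with r ≥ 1 and 0 ≤ g ≤ r. In particular, s₁…s_n is nonrepetitive (contains no factor x₁…x_r x₁…x_r). -/

import Mathlib

open Finset

open scoped Classical

/-- A word is good if it contains no near repetition with gap at most the period. -/
def GoodW (w : List ℕ) : Prop :=
  ∀ a r g : ℕ, 1 ≤ r → g ≤ r → a + 2 * r + g ≤ w.length →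
    ∃ i < r, w.getD (a + i) 0 ≠ w.getD (a + r + g + i) 0

lemma goodW_nil : GoodW [] := by
  intro a r g hr hg hlen
  simp at hlen; omega

/-- The finset of good words of length `n` with `i`-th letter from `L i`. -/
noncomputable def SW (L : ℕ → Finset ℕ) : ℕ → Finset (List ℕ)
  | 0 => {[]}
  | n + 1 => ((SW L n ×ˢ L n).filter (fun p => GoodW (p.1 ++ [p.2]))).image
      (fun p => p.1 ++ [p.2])

lemma mem_SW_succ {L : ℕ → Finset ℕ} {n : ℕ} {w : List ℕ} :
    w ∈ SW L (n + 1) ↔ ∃ v c, v ∈ SW L n ∧ c ∈ L n ∧ GoodW (v ++ [c]) ∧ w = v ++ [c] := by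
  simp only [SW, Finset.mem_image, Finset.mem_filter, Finset.mem_product]
  constructor
  · rintro ⟨⟨v, c⟩, ⟨⟨h1, h2⟩, h3⟩, h4⟩
    exact ⟨v, c, h1, h2, h3, h4.symm⟩
  · rintro ⟨v, c, h1, h2, h3, h4⟩
    exact ⟨⟨v, c⟩, ⟨⟨h1, h2⟩, h3⟩, h4.symm⟩

lemma length_mem_SW {L : ℕ → Finset ℕ} : ∀ {n : ℕ} {w : List ℕ}, w ∈ SW L n → w.length = n := by
  intro n
  induction n with
  | zero => intro w hw; simp [SW] at hw; simp [hw]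
  | succ n ih =>
    intro w hw
    obtain ⟨v, c, h1, _, _, h4⟩ := mem_SW_succ.mp hw
    simp [h4, ih h1]

lemma good_mem_SW {L : ℕ → Finset ℕ} : ∀ {n : ℕ} {w : List ℕ}, w ∈ SW L n → GoodW w := by
  intro n
  cases n with
  | zero => intro w hw; simp [SW] at hw; simpa [hw] using goodW_nil
  | succ n =>
    intro w hw
    obtain ⟨v, c, _, _, h3, h4⟩ := mem_SW_succ.mp hw
    simpa [h4] using h3

lemma memL_SW {L : ℕ → Finset ℕ} : ∀ {n : ℕ} {w : List ℕ}, w ∈ SW L n →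
    ∀ i < n, w.getD i 0 ∈ L i := by
  intro n
  induction n with
  | zero => intro w _ i hi; omega
  | succ n ih =>
    intro w hw i hi
    obtain ⟨v, c, h1, h2, _, h4⟩ := mem_SW_succ.mp hw
    have hv : v.length = n := length_mem_SW h1
    subst h4
    rcases Nat.lt_or_ge i n with h | h
    · have hlt : i < v.length := by omega
      have : (v ++ [c]).getD i 0 = v.getD i 0 := by
        rw [List.getD_eq_getElem _ _ (by simp; omega), List.getD_eq_getElem _ _ hlt,
          List.getElem_append]
        simp [hlt]
      rw [this]; exact ih h1 i h
    · have hin : i = n := by omega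
      subst hin
      have : (v ++ [c]).getD i 0 = c := by
        rw [List.getD_eq_getElem _ _ (by simp; omega), List.getElem_append]
        simp [hv]
      rw [this]; exact h2

lemma take_mem_SW {L : ℕ → Finset ℕ} : ∀ {n : ℕ} {w : List ℕ}, w ∈ SW L n →
    ∀ k ≤ n, w.take k ∈ SW L k := by
  intro n
  induction n with
  | zero =>
    intro w hw k hk
    interval_cases k
    simp [SW] at hw
    subst hw
    simp [SW]
  | succ n ih =>
    intro w hw k hk
    obtain ⟨v, c, h1, _, _, h4⟩ := mem_SW_succ.mp hw
    have hv : v.length = n := length_mem_SW h1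
    rcases Nat.lt_or_ge k (n + 1) with h | h
    · have hk' : k ≤ n := by omega
      have : w.take k = v.take k := by
        rw [h4]; exact List.take_append_of_le_length (by omega)
      rw [this]; exact ih h1 k hk'
    · have hk' : k = n + 1 := by omega
      subst hk'
      have : w.take (n + 1) = w := by
        apply List.take_of_length_le
        rw [h4]; simp [hv]
      rw [this]; exact hw

lemma card_SW_succ (L : ℕ → Finset ℕ) (n : ℕ) :
    (SW L (n + 1)).card +
      ((SW L n ×ˢ L n).filter (fun p => ¬ GoodW (p.1 ++ [p.2]))).card
    = (SW L n).card * (L n).card := by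
  have hinj : Set.InjOn (fun p : List ℕ × ℕ => p.1 ++ [p.2])
      ((SW L n ×ˢ L n).filter (fun p => GoodW (p.1 ++ [p.2]))) := by
    intro p hp q hq hpq
    simp only [Finset.coe_filter, Set.mem_setOf_eq, Finset.mem_product] at hp hq
    have h1 : p.1.length = q.1.length := by
      rw [length_mem_SW hp.1.1, length_mem_SW hq.1.1]
    obtain ⟨e1, e2⟩ := List.append_inj hpq h1
    have e3 : p.2 = q.2 := by simpa using e2
    exact Prod.ext e1 e3
  have him : (SW L (n + 1)).card
      = ((SW L n ×ˢ L n).filter (fun p => GoodW (p.1 ++ [p.2]))).card := by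
    rw [SW]; exact Finset.card_image_of_injOn hinj
  rw [him, Finset.card_filter_add_card_filter_not, Finset.card_product]

/-- The key injection: bad extensions with a near repetition of period `d` whose
repeated part has length `r+1` are determined by their prefix of length `n - r`. -/
lemma filter_rd_card (L : ℕ → Finset ℕ) (n r d : ℕ) (hrd : r + 1 ≤ d) :
    (((SW L n ×ˢ L n).filter (fun p => ¬ GoodW (p.1 ++ [p.2]))).filter
       (fun p => ∃ a, a + (r + 1) + d = n + 1 ∧ ∀ i < r + 1,
          (p.1 ++ [p.2]).getD (a + i) 0 = (p.1 ++ [p.2]).getD (a + d + i) 0)).card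
      ≤ (SW L (n - r)).card := by
  apply Finset.card_le_card_of_injOn (fun p => p.1.take (n - r))
  · intro p hp
    simp only [Finset.mem_coe, Finset.mem_filter, Finset.mem_product] at hp
    exact take_mem_SW hp.1.1.1 (n - r) (by omega)
  · intro p hp q hq htake
    have htake' : p.1.take (n - r) = q.1.take (n - r) := htake
    simp only [Finset.mem_coe, Finset.mem_filter, Finset.mem_product] at hp hq
    obtain ⟨⟨⟨hp1, _⟩, _⟩, a, ha, hper⟩ := hp
    obtain ⟨⟨⟨hq1, _⟩, _⟩, a2, ha2, hper2⟩ := hq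
    have haa : a2 = a := by omega
    rw [haa] at ha2 hper2
    have hpl : p.1.length = n := length_mem_SW hp1
    have hql : q.1.length = n := length_mem_SW hq1
    have had : a + d = n - r := by omega
    -- equality on the common prefix
    have hpre : ∀ j, j < n - r →
        (p.1 ++ [p.2]).getD j 0 = (q.1 ++ [q.2]).getD j 0 := by
      intro j hj
      rw [List.getD_eq_getElem?_getD, List.getD_eq_getElem?_getD,
        List.getElem?_append, List.getElem?_append]
      rw [if_pos (show j < p.1.length by omega), if_pos (show j < q.1.length by omega)]
      have e1 : p.1[j]? = (p.1.take (n - r))[j]? := by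
        rw [List.getElem?_take, if_pos hj]
      have e2 : q.1[j]? = (q.1.take (n - r))[j]? := by
        rw [List.getElem?_take, if_pos hj]
      rw [e1, e2, htake']
    have hall : ∀ j, j < n + 1 →
        (p.1 ++ [p.2]).getD j 0 = (q.1 ++ [q.2]).getD j 0 := by
      intro j hj
      rcases Nat.lt_or_ge j (n - r) with h | h
      · exact hpre j h
      · have hi : j - (a + d) < r + 1 := by omega
        have hji : a + d + (j - (a + d)) = j := by omega
        have h1 := hper _ hi
        have h2 := hper2 _ hi
        rw [hji] at h1 h2
        have hlow : a + (j - (a + d)) < n - r := by omega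
        rw [← h1, ← h2]
        exact hpre _ hlow
    have huv : p.1 ++ [p.2] = q.1 ++ [q.2] := by
      apply List.ext_getElem (by simp; omega)
      intro j h1 h2
      have h1' : j < n + 1 := by simpa [hpl] using h1
      have := hall j h1'
      rwa [List.getD_eq_getElem _ _ h1, List.getD_eq_getElem _ _ h2] at this
    obtain ⟨e1, e2⟩ := List.append_inj huv (by omega)
    have e3 : p.2 = q.2 := by simpa using e2
    exact Prod.ext e1 e3

lemma bad_card_le (L : ℕ → Finset ℕ) (n : ℕ) :
    ((SW L n ×ˢ L n).filter (fun p => ¬ GoodW (p.1 ++ [p.2]))).card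
      ≤ ∑ r ∈ range (n + 1), (r + 2) * (SW L (n - r)).card := by
  set B := (SW L n ×ˢ L n).filter (fun p => ¬ GoodW (p.1 ++ [p.2])) with hB
  have hsub : B ⊆ (range (n + 1)).biUnion (fun r => (Finset.Icc (r + 1) (2 * r + 2)).biUnion
      (fun d => B.filter (fun p => ∃ a, a + (r + 1) + d = n + 1 ∧ ∀ i < r + 1,
          (p.1 ++ [p.2]).getD (a + i) 0 = (p.1 ++ [p.2]).getD (a + d + i) 0))) := by
    intro p hp
    have hp' := hp
    rw [hB, Finset.mem_filter, Finset.mem_product] at hp'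
    obtain ⟨⟨hp1, _⟩, hbad⟩ := hp'
    have hpl : p.1.length = n := length_mem_SW hp1
    have hul : (p.1 ++ [p.2]).length = n + 1 := by simp [hpl]
    rw [GoodW] at hbad
    push_neg at hbad
    obtain ⟨a, r, g, hr, hg, hlen, heq⟩ := hbad
    rw [hul] at hlen
    -- the bad factor must end exactly at the last position
    have hend : a + 2 * r + g = n + 1 := by
      by_contra hne
      have hle : a + 2 * r + g ≤ n := by omega
      have hgood := good_mem_SW hp1 a r g hr hg (by omega)
      obtain ⟨i, hi, hne'⟩ := hgood
      apply hne'
      have e1 : (p.1 ++ [p.2]).getD (a + i) 0 = p.1.getD (a + i) 0 := by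
        rw [List.getD_eq_getElem?_getD, List.getD_eq_getElem?_getD, List.getElem?_append,
          if_pos (show a + i < p.1.length by omega)]
      have e2 : (p.1 ++ [p.2]).getD (a + r + g + i) 0 = p.1.getD (a + r + g + i) 0 := by
        rw [List.getD_eq_getElem?_getD, List.getD_eq_getElem?_getD, List.getElem?_append,
          if_pos (show a + r + g + i < p.1.length by omega)]
      rw [← e1, ← e2]
      exact heq i hi
    rw [Finset.mem_biUnion]
    refine ⟨r - 1, Finset.mem_range.mpr (by omega), ?_⟩
    rw [Finset.mem_biUnion]
    refine ⟨r + g, Finset.mem_Icc.mpr (by omega), ?_⟩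
    rw [Finset.mem_filter]
    refine ⟨hp, a, by omega, ?_⟩
    intro i hi
    have hi' : i < r := by omega
    have e : a + (r + g) + i = a + r + g + i := by omega
    rw [e]
    exact heq i hi' 
  calc B.card ≤ _ := Finset.card_le_card hsub
    _ ≤ ∑ r ∈ range (n + 1), ((Finset.Icc (r + 1) (2 * r + 2)).biUnion
        (fun d => B.filter (fun p => ∃ a, a + (r + 1) + d = n + 1 ∧ ∀ i < r + 1,
          (p.1 ++ [p.2]).getD (a + i) 0 = (p.1 ++ [p.2]).getD (a + d + i) 0))).card :=
        Finset.card_biUnion_le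
    _ ≤ ∑ r ∈ range (n + 1), (r + 2) * (SW L (n - r)).card := by
        apply Finset.sum_le_sum
        intro r _
        calc ((Finset.Icc (r + 1) (2 * r + 2)).biUnion _).card
            ≤ ∑ d ∈ Finset.Icc (r + 1) (2 * r + 2), (B.filter (fun p => ∃ a,
                a + (r + 1) + d = n + 1 ∧ ∀ i < r + 1,
                (p.1 ++ [p.2]).getD (a + i) 0 = (p.1 ++ [p.2]).getD (a + d + i) 0)).card :=
              Finset.card_biUnion_le
          _ ≤ ∑ d ∈ Finset.Icc (r + 1) (2 * r + 2), (SW L (n - r)).card := by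
              apply Finset.sum_le_sum
              intro d hd
              rw [Finset.mem_Icc] at hd
              exact filter_rd_card L n r d hd.1
          _ = (r + 2) * (SW L (n - r)).card := by
              rw [Finset.sum_const, Nat.card_Icc, smul_eq_mul]
              congr 1
              omega

lemma sumA1 (a : ℕ → ℕ) : ∀ n : ℕ, (∀ k < n, 16 * a k ≤ a (k + 1)) →
    ∑ r ∈ range (n + 1), a (n - r) ≤ 2 * a n := by
  intro n
  induction n with
  | zero => intro _; simp; omega
  | succ n ih =>
    intro h
    have key : ∑ r ∈ range (n + 2), a (n + 1 - r)
        = (∑ i ∈ range (n + 1), a (n - i)) + a (n + 1) := by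
      rw [Finset.sum_range_succ' (fun r => a (n + 1 - r)) (n + 1)]
      congr 1
      apply Finset.sum_congr rfl
      intro i _
      congr 1
      omega
    rw [key]
    have h1 : ∑ i ∈ range (n + 1), a (n - i) ≤ 2 * a n := ih (fun k hk => h k (by omega))
    have h2 : 16 * a n ≤ a (n + 1) := h n (by omega)
    omega

lemma sumA2 (a : ℕ → ℕ) : ∀ n : ℕ, (∀ k < n, 16 * a k ≤ a (k + 1)) →
    ∑ r ∈ range (n + 1), (r + 2) * a (n - r) ≤ 3 * a n := by
  intro n
  induction n with
  | zero => intro _; simp; omega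
  | succ n ih =>
    intro h
    have key : ∑ r ∈ range (n + 2), (r + 2) * a (n + 1 - r)
        = (∑ i ∈ range (n + 1), (i + 3) * a (n - i)) + 2 * a (n + 1) := by
      rw [Finset.sum_range_succ' (fun r => (r + 2) * a (n + 1 - r)) (n + 1)]
      congr 1
      apply Finset.sum_congr rfl
      intro i _
      have : n + 1 - (i + 1) = n - i := by omega
      rw [this]
    rw [key]
    have hsplit : ∑ i ∈ range (n + 1), (i + 3) * a (n - i)
        = (∑ i ∈ range (n + 1), (i + 2) * a (n - i)) + ∑ i ∈ range (n + 1), a (n - i) := by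
      rw [← Finset.sum_add_distrib]
      apply Finset.sum_congr rfl
      intro i _
      ring
    have h1 : ∑ i ∈ range (n + 1), (i + 2) * a (n - i) ≤ 3 * a n :=
      ih (fun k hk => h k (by omega))
    have h2 : ∑ i ∈ range (n + 1), a (n - i) ≤ 2 * a n :=
      sumA1 a n (fun k hk => h k (by omega))
    have h3 : 16 * a n ≤ a (n + 1) := h n (by omega)
    omega

lemma grow (L : ℕ → Finset ℕ) (hL : ∀ i, 33 ≤ (L i).card) :
    ∀ n : ℕ, 16 * (SW L n).card ≤ (SW L (n + 1)).card := by
  intro n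
  induction n using Nat.strong_induction_on with
  | _ n ih =>
    have h16 : ∀ k < n, 16 * (SW L k).card ≤ (SW L (k + 1)).card := fun k hk => ih k hk
    have hbad : ((SW L n ×ˢ L n).filter (fun p => ¬ GoodW (p.1 ++ [p.2]))).card
        ≤ 3 * (SW L n).card :=
      le_trans (bad_card_le L n) (sumA2 (fun k => (SW L k).card) n h16)
    have hstep := card_SW_succ L n
    have hmul : (SW L n).card * 33 ≤ (SW L n).card * (L n).card :=
      Nat.mul_le_mul_left _ (hL n)
    omega

lemma SW_pos (L : ℕ → Finset ℕ) (hL : ∀ i, 33 ≤ (L i).card) :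
    ∀ n : ℕ, 0 < (SW L n).card := by
  intro n
  induction n with
  | zero => simp [SW]
  | succ n ih =>
    have := grow L hL n
    omega

/-- For every `n ≥ 1` and color lists `L 0, …, L (n-1)`, each of size at least 33,
there is a choice `s i ∈ L i` such that the sequence `s 0 … s (n-1)` contains no factor
of the form `x₁…x_r y₁…y_g x₁…x_r` with `r ≥ 1` and `0 ≤ g ≤ r`; in particular it is
nonrepetitive (contains no factor `x₁…x_r x₁…x_r`). -/
theorem stmt16 (n : ℕ) (hn : 1 ≤ n) (L : ℕ → Finset ℕ)
    (hL : ∀ i < n, 33 ≤ (L i).card) :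
    ∃ s : ℕ → ℕ, (∀ i < n, s i ∈ L i) ∧
      (∀ a r g : ℕ, 1 ≤ r → g ≤ r → a + 2 * r + g ≤ n →
        ∃ i < r, s (a + i) ≠ s (a + r + g + i)) ∧
      (∀ a r : ℕ, 1 ≤ r → a + 2 * r ≤ n →
        ∃ i < r, s (a + i) ≠ s (a + r + i)) := by
  set L' : ℕ → Finset ℕ := fun i => if 33 ≤ (L i).card then L i else Finset.range 33 with hL'def
  have hL' : ∀ i, 33 ≤ (L' i).card := by
    intro i
    by_cases h : 33 ≤ (L i).card
    · simp [hL'def, h]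
    · simp [hL'def, h]
  have hLL : ∀ i < n, L' i = L i := by
    intro i hi
    simp [hL'def, hL i hi]
  obtain ⟨w, hw⟩ := Finset.card_pos.mp (SW_pos L' hL' n)
  have hwl : w.length = n := length_mem_SW hw
  have hwg : GoodW w := good_mem_SW hw
  refine ⟨fun i => w.getD i 0, ?_, ?_, ?_⟩
  · intro i hi
    rw [← hLL i hi]
    exact memL_SW hw i hi
  · intro a r g hr hg hle
    exact hwg a r g hr hg (by omega)
  · intro a r hr hle
    obtain ⟨i, hi, hne⟩ := hwg a r 0 hr (by omega) (by omega)
    exact ⟨i, hi, by simpa using hne⟩
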